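/- arXiv:2208.02107 — 3 statements merged into one kernel-verified Lean document; each statement's English description precedes it below -/
import Mathlib

section
/- Let p be a real number with 1 ≤ p, let f₁, f₂, g : ℤ^d → ℝ, and assume B is nonempty. Then ( ∑_{r ∈ R} | (f₁ ∗ g)(r) − (f₂ ∗ g)(r) |^p )^{1/p} ≤ ( ∑_{b ∈ B} |g(b)| ) · ( ∑_{q ∈ P} |f₁(q) − f₂(q)|^p )^{1/p} ≤ |B| · ( max_{b ∈ B} |g(b)| ) · ( ∑_{q ∈ P} |f₁(q) − f₂(q)|^p )^{1/p}, where |B| denotes the cardinality of B. (This is the ℓ^p-norm inequality, a strided discrete Young inequality, underlying the paper's stability result for image convolutional persistence.) -/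
open Finset

/-- The strided discrete convolution of `f : ℤ^d → ℝ` with a filter `g`
supported on the finite set `B`, with stride vector `k`:
`(f ∗ g)(r) = ∑_{b ∈ B} g(b) · f(b + r ⊙ k)`. -/
noncomputable def stridedConv {d : ℕ} (B : Finset (Fin d → ℤ)) (k : Fin d → ℤ)
    (f g : (Fin d → ℤ) → ℝ) (r : Fin d → ℤ) : ℝ :=
  ∑ b ∈ B, g b * f (b + fun i => r i * k i)

/-- Minkowski inequality for a finite sum of functions. -/
lemma lp_sum_le {ι κ : Type*} (R : Finset ι) (B : Finset κ) (F : κ → ι → ℝ)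
    {p : ℝ} (hp : 1 ≤ p) :
    (∑ r ∈ R, |∑ b ∈ B, F b r| ^ p) ^ (1 / p) ≤
      ∑ b ∈ B, (∑ r ∈ R, |F b r| ^ p) ^ (1 / p) := by
  classical
  induction B using Finset.cons_induction with
  | empty =>
      simp [Real.zero_rpow (by positivity : p ≠ 0),
        Real.zero_rpow (by positivity : p⁻¹ ≠ 0)]
  | cons a B ha ih =>
      simp only [Finset.sum_cons]
      refine le_trans (Real.Lp_add_le R (fun r => F a r) (fun r => ∑ b ∈ B, F b r) hp) ?_
      exact add_le_add (le_refl _) ih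

/-- The strided discrete Young inequality: for `1 ≤ p`,
`‖f₁ ∗ g − f₂ ∗ g‖_{ℓ^p(R)} ≤ ‖g‖_{ℓ^1(B)} · ‖f₁ − f₂‖_{ℓ^p(P)}
  ≤ |B| · ‖g‖_{ℓ^∞(B)} · ‖f₁ − f₂‖_{ℓ^p(P)}`. -/
theorem stridedConv_lp_stability {d : ℕ} (hd : 1 ≤ d)
    (P B R : Finset (Fin d → ℤ)) (k : Fin d → ℤ) (hk : ∀ i, 1 ≤ k i)
    (hBRP : ∀ b ∈ B, ∀ r ∈ R, (b + fun i => r i * k i) ∈ P)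
    (p : ℝ) (hp : 1 ≤ p) (f₁ f₂ g : (Fin d → ℤ) → ℝ) (hB : B.Nonempty) :
    (∑ r ∈ R, |stridedConv B k f₁ g r - stridedConv B k f₂ g r| ^ p) ^ (1 / p) ≤
        (∑ b ∈ B, |g b|) * (∑ q ∈ P, |f₁ q - f₂ q| ^ p) ^ (1 / p) ∧
      (∑ b ∈ B, |g b|) * (∑ q ∈ P, |f₁ q - f₂ q| ^ p) ^ (1 / p) ≤
        (B.card : ℝ) * (B.sup' hB fun b => |g b|) *
          (∑ q ∈ P, |f₁ q - f₂ q| ^ p) ^ (1 / p) := by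
  classical
  have hp0 : 0 < p := lt_of_lt_of_le one_pos hp
  set Δ : (Fin d → ℤ) → ℝ := fun q => f₁ q - f₂ q with hΔ
  set NP : ℝ := (∑ q ∈ P, |Δ q| ^ p) ^ (1 / p) with hNP
  have hNPnn : 0 ≤ NP := Real.rpow_nonneg (Finset.sum_nonneg fun q _ => by positivity) _
  constructor
  · -- rewrite the difference of convolutions as a sum
    have h1 : ∀ r, stridedConv B k f₁ g r - stridedConv B k f₂ g r
        = ∑ b ∈ B, g b * Δ (b + fun i => r i * k i) := by
      intro r
      simp only [stridedConv, ← Finset.sum_sub_distrib, hΔ, mul_sub]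
    calc (∑ r ∈ R, |stridedConv B k f₁ g r - stridedConv B k f₂ g r| ^ p) ^ (1 / p)
        = (∑ r ∈ R, |∑ b ∈ B, g b * Δ (b + fun i => r i * k i)| ^ p) ^ (1 / p) := by
          simp_rw [h1]
      _ ≤ ∑ b ∈ B, (∑ r ∈ R, |g b * Δ (b + fun i => r i * k i)| ^ p) ^ (1 / p) :=
          lp_sum_le R B _ hp
      _ ≤ ∑ b ∈ B, |g b| * NP := by
          refine Finset.sum_le_sum fun b hb => ?_
          have : (∑ r ∈ R, |g b * Δ (b + fun i => r i * k i)| ^ p) ^ (1 / p)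
              = |g b| * (∑ r ∈ R, |Δ (b + fun i => r i * k i)| ^ p) ^ (1 / p) := by
            have hsum : (∑ r ∈ R, |g b * Δ (b + fun i => r i * k i)| ^ p)
                = |g b| ^ p * ∑ r ∈ R, |Δ (b + fun i => r i * k i)| ^ p := by
              simp_rw [abs_mul, Real.mul_rpow (abs_nonneg _) (abs_nonneg _)]
              rw [← Finset.mul_sum]
            rw [hsum,
              Real.mul_rpow (by positivity) (Finset.sum_nonneg fun r _ => by positivity),
              ← Real.rpow_mul (abs_nonneg _), mul_one_div, div_self (ne_of_gt hp0),
              Real.rpow_one]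
          rw [this]
          refine mul_le_mul_of_nonneg_left ?_ (abs_nonneg _)
          -- injectivity of r ↦ b + r ⊙ k on R
          have hinj : Set.InjOn (fun r : Fin d → ℤ => b + fun i => r i * k i) R := by
            intro r hr r' hr' h
            funext i
            have := congrFun h i
            simp only [Pi.add_apply] at this
            have h2 : r i * k i = r' i * k i := by linarith
            have hki : k i ≠ 0 := by have := hk i; omega
            exact mul_right_cancel₀ hki h2
          have hsum : ∑ r ∈ R, |Δ (b + fun i => r i * k i)| ^ p
              = ∑ q ∈ R.image (fun r => b + fun i => r i * k i), |Δ q| ^ p := by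
            rw [Finset.sum_image (fun x hx y hy h => hinj hx hy h)]
          refine Real.rpow_le_rpow (Finset.sum_nonneg fun r _ => by positivity) ?_
            (by positivity)
          rw [hsum]
          refine Finset.sum_le_sum_of_subset_of_nonneg ?_ (fun q _ _ => by positivity)
          intro q hq
          obtain ⟨r, hr, rfl⟩ := Finset.mem_image.mp hq
          exact hBRP b hb r hr
      _ = (∑ b ∈ B, |g b|) * NP := by rw [Finset.sum_mul]
  · refine mul_le_mul_of_nonneg_right ?_ hNPnn
    calc ∑ b ∈ B, |g b| ≤ ∑ _b ∈ B, (B.sup' hB fun b => |g b|) :=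
          Finset.sum_le_sum fun b hb => Finset.le_sup' (fun b => |g b|) hb
      _ = (B.card : ℝ) * (B.sup' hB fun b => |g b|) := by
          rw [Finset.sum_const, nsmul_eq_mul]
end

section
/- Let m, M be natural numbers with M ≥ 2m + 1, and let S be a finite set of points in ℝ^M in general position, i.e. every subset of S with at most M + 1 elements is affinely independent. Let σ₁, σ₂ ⊆ S with |σ₁| ≤ m + 1 and |σ₂| ≤ m + 1. Then convexHull(σ₁) ∩ convexHull(σ₂) = convexHull(σ₁ ∩ σ₂). (This expresses the injectivity of the piecewise-linear extension of a general-position embedding of the vertex set of an m-dimensional simplicial complex into ℝ^M: simplices of the geometric realization, which are convex hulls of at most m + 1 embedded vertices, intersect exactly in the simplex spanned by their common vertices.) -/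
/-- If `S ⊆ ℝ^M` is a finite set in general position (every
subset of at most `M + 1` points is affinely independent), `M ≥ 2m + 1`, and
`σ₁, σ₂ ⊆ S` have at most `m + 1` elements (simplices of an `m`-dimensional
simplicial complex), then `convexHull σ₁ ∩ convexHull σ₂ = convexHull (σ₁ ∩ σ₂)`. -/
theorem simplicial_genpos_convexHull_inter {m M : ℕ} (hM : 2 * m + 1 ≤ M)
    (S : Finset (Fin M → ℝ))
    (hS : ∀ T : Finset (Fin M → ℝ), T ⊆ S → T.card ≤ M + 1 →
      AffineIndependent ℝ ((↑) : T → (Fin M → ℝ)))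
    (σ₁ σ₂ : Finset (Fin M → ℝ)) (h₁ : σ₁ ⊆ S) (h₂ : σ₂ ⊆ S)
    (hc₁ : σ₁.card ≤ m + 1) (hc₂ : σ₂.card ≤ m + 1) :
    convexHull ℝ (σ₁ : Set (Fin M → ℝ)) ∩ convexHull ℝ (σ₂ : Set (Fin M → ℝ)) =
      convexHull ℝ ((σ₁ ∩ σ₂ : Finset (Fin M → ℝ)) : Set (Fin M → ℝ)) := by
  have hcard : (σ₁ ∪ σ₂).card ≤ M + 1 := by
    calc (σ₁ ∪ σ₂).card ≤ σ₁.card + σ₂.card := Finset.card_union_le _ _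
    _ ≤ (m + 1) + (m + 1) := add_le_add hc₁ hc₂
    _ ≤ M + 1 := by omega
  have := (hS (σ₁ ∪ σ₂) (Finset.union_subset h₁ h₂) hcard).convexHull_inter (R := ℝ)
    (Finset.subset_union_left) (Finset.subset_union_right)
  rw [Finset.coe_inter, ← this]
end

section
/- Let n ≥ 1 and d ≥ 1. The set of pairs (A, X), where A is an n × n real matrix and X is an n × d real matrix, such that the n rows of the product matrix A·X, viewed as a family of n points in ℝ^d, are in general position — i.e. for every subset s ⊆ Fin n with |s| ≤ d + 1 the corresponding subfamily of rows of A·X is affinely independent — is open and dense in the product space of pairs of matrices Matrix (Fin n) (Fin n) ℝ × Matrix (Fin n) (Fin d) ℝ with its natural (Euclidean) topology. (This is the genericity claim used in the paper's injectivity proposition for simplicial convolutional persistence.) -/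
open Polynomial

section Aux

/-- Homogenization: affine independence in `ℝ^d` is linear independence of
`(1, p i)` in `ℝ^(d+1)`. -/
lemma affineIndependent_iff_homog {ι : Type*} [Fintype ι] {d : ℕ} (p : ι → (Fin d → ℝ)) :
    AffineIndependent ℝ p ↔
      LinearIndependent ℝ (fun i => (Fin.cons 1 (p i) : Fin (d + 1) → ℝ)) := by
  rw [Fintype.linearIndependent_iff, affineIndependent_iff]
  constructor
  · intro h w hw
    have h0 := congrFun hw 0
    have hsum : ∑ i, w i = 0 := by
      simpa using h0
    have hpt : ∑ i, w i • p i = 0 := by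
      funext c
      have := congrFun hw c.succ
      simpa [Finset.sum_apply] using this
    exact fun i => h Finset.univ w hsum hpt i (Finset.mem_univ i)
  · intro h s w hw hpt i hi
    classical
    set w' : ι → ℝ := fun i => if i ∈ s then w i else 0 with hw'
    have key : ∀ i, w' i = 0 := by
      apply h
      funext c
      rw [Finset.sum_apply]
      refine Fin.cases ?_ ?_ c
      · simpa [w', Finset.sum_ite_mem] using hw
      · intro c
        have := congrFun hpt c
        simp only [Finset.sum_apply, Pi.zero_apply, Pi.smul_apply] at this ⊢
        rw [← Finset.sum_subset (Finset.subset_univ s)]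
        · simpa [w'] using this
        · intro x _ hx; simp [w', hx]
    have := key i
    simpa [w', hi] using this

/-- Gram criterion: a finite family of vectors in `ℝ^m` is linearly independent
iff its Gram determinant is nonzero. -/
lemma linearIndependent_iff_gram_det {ι : Type*} [Fintype ι] [DecidableEq ι] {m : ℕ}
    (v : ι → (Fin m → ℝ)) :
    LinearIndependent ℝ v ↔ (Matrix.of fun i j => ∑ c, v i c * v j c).det ≠ 0 := by
  have swap3 : ∀ (f : Fin m → ι → ι → ℝ),
      ∑ c, ∑ i, ∑ j, f c i j = ∑ i, ∑ j, ∑ c, f c i j := by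
    intro f
    rw [Finset.sum_comm]
    exact Finset.sum_congr rfl fun i _ => Finset.sum_comm
  rw [Fintype.linearIndependent_iff]
  constructor
  · intro h hdet
    obtain ⟨w, hwne, hmul⟩ := (Matrix.exists_mulVec_eq_zero_iff).2 hdet
    have h1 : ∑ i, w i * ((Matrix.of fun i j => ∑ c, v i c * v j c).mulVec w) i = 0 := by
      rw [hmul]; simp
    have hq : ∑ c, (∑ i, w i * v i c) ^ 2 = 0 := by
      calc ∑ c, (∑ i, w i * v i c) ^ 2
          = ∑ c, ∑ i, ∑ j, (w i * v i c) * (w j * v j c) := by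
            refine Finset.sum_congr rfl fun c _ => ?_
            rw [sq, Finset.sum_mul_sum]
        _ = ∑ i, ∑ j, ∑ c, (w i * v i c) * (w j * v j c) := swap3 _
        _ = ∑ i, w i * ((Matrix.of fun i j => ∑ c, v i c * v j c).mulVec w) i := by
            refine Finset.sum_congr rfl fun i _ => ?_
            simp only [Matrix.mulVec, dotProduct, Matrix.of_apply, Finset.mul_sum,
              Finset.sum_mul]
            exact Finset.sum_congr rfl fun j _ => Finset.sum_congr rfl fun c _ => by ring
        _ = 0 := h1
    have hz : ∀ c, ∑ i, w i * v i c = 0 := by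
      intro c
      have := (Finset.sum_eq_zero_iff_of_nonneg (fun c _ => sq_nonneg _)).1 hq c (Finset.mem_univ c)
      exact (pow_eq_zero_iff (two_ne_zero)).mp this
    have : ∀ i, w i = 0 := by
      apply h
      funext c
      simpa [Finset.sum_apply] using hz c
    exact hwne (funext this)
  · intro hdet w hw i
    by_contra hwi
    refine hdet ((Matrix.exists_mulVec_eq_zero_iff).1 ⟨w, fun h0 => hwi (congrFun h0 i), ?_⟩)
    funext k
    have hz : ∀ c, ∑ j, w j * v j c = 0 := by
      intro c
      have := congrFun hw c
      simpa [Finset.sum_apply] using this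
    simp only [Matrix.mulVec, dotProduct, Matrix.of_apply, Pi.zero_apply]
    calc ∑ j, (∑ c, v k c * v j c) * w j
        = ∑ j, ∑ c, (v k c * v j c) * w j := by
          exact Finset.sum_congr rfl fun j _ => Finset.sum_mul _ _ _
      _ = ∑ c, ∑ j, (v k c * v j c) * w j := Finset.sum_comm
      _ = ∑ c, v k c * ∑ j, w j * v j c := by
          refine Finset.sum_congr rfl fun c _ => ?_
          rw [Finset.mul_sum]
          exact Finset.sum_congr rfl fun j _ => by ring
      _ = 0 := by simp [hz]

/-- Rows of a (rectangular) Vandermonde matrix with distinct nodes are linearly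
independent when there are at most `d + 1` of them. -/
lemma vandermonde_rows_linearIndependent {ι : Type*} [Fintype ι] [DecidableEq ι] {d : ℕ}
    (x : ι → ℝ) (hx : Function.Injective x) (hcard : Fintype.card ι ≤ d + 1) :
    LinearIndependent ℝ (fun i => (fun c : Fin (d + 1) => x i ^ (c : ℕ))) := by
  rw [Fintype.linearIndependent_iff]
  intro g hg i
  have hc : ∀ c : Fin (d + 1), ∑ j, g j * x j ^ (c : ℕ) = 0 := by
    intro c
    have := congrFun hg c
    simpa [Finset.sum_apply] using this
  have key : ∀ Q : ℝ[X], Q.natDegree < d + 1 → ∑ j, g j * Q.eval (x j) = 0 := by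
    intro Q hQ
    calc ∑ j, g j * Q.eval (x j)
        = ∑ j, ∑ c ∈ Finset.range (d + 1), g j * (Q.coeff c * x j ^ c) := by
          refine Finset.sum_congr rfl fun j _ => ?_
          rw [eval_eq_sum_range' hQ, Finset.mul_sum]
      _ = ∑ c ∈ Finset.range (d + 1), Q.coeff c * ∑ j, g j * x j ^ c := by
          rw [Finset.sum_comm]
          refine Finset.sum_congr rfl fun c _ => ?_
          rw [Finset.mul_sum]
          exact Finset.sum_congr rfl fun j _ => by ring
      _ = 0 := by
          refine Finset.sum_eq_zero fun c hcr => ?_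
          have : ∑ j, g j * x j ^ c = 0 := by
            have := hc ⟨c, Finset.mem_range.mp hcr⟩
            simpa using this
          rw [this, mul_zero]
  have hinj : Set.InjOn x (Finset.univ : Finset ι) := fun a _ b _ hab => hx hab
  have hdeg : (Lagrange.basis Finset.univ x i).natDegree < d + 1 := by
    rw [Lagrange.natDegree_basis hinj (Finset.mem_univ i)]
    have : (Finset.univ : Finset ι).card = Fintype.card ι := Finset.card_univ
    omega
  have := key _ hdeg
  rw [Finset.sum_eq_single i] at this
  · simpa [Lagrange.eval_basis_self hinj (Finset.mem_univ i)] using this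
  · intro j _ hji
    rw [Lagrange.eval_basis_of_ne (Ne.symm hji) (Finset.mem_univ j), mul_zero]
  · exact fun h => absurd (Finset.mem_univ i) h

lemma isOpen_setOf_affineIndependent' {ι : Type*} [Fintype ι] {d : ℕ} :
    IsOpen {p : ι → (Fin d → ℝ) | AffineIndependent ℝ p} := by
  have hset : {p : ι → (Fin d → ℝ) | AffineIndependent ℝ p} =
      (fun (p : ι → (Fin d → ℝ)) (i : ι) => (Fin.cons 1 (p i) : Fin (d + 1) → ℝ)) ⁻¹'
        {f | LinearIndependent ℝ f} := by
    ext p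
    exact affineIndependent_iff_homog p
  rw [hset]
  refine isOpen_setOf_linearIndependent.preimage ?_
  refine continuous_pi fun i => continuous_pi fun c => ?_
  refine Fin.cases ?_ ?_ c
  · simpa using continuous_const
  · intro k
    simpa using continuous_apply_apply i k

def momentE (n d : ℕ) : Matrix (Fin n) (Fin d) ℝ :=
  Matrix.of fun i c => ((i : ℕ) : ℝ) ^ ((c : ℕ) + 1)

lemma momentE_genpos {n d : ℕ} (s : Finset (Fin n)) (hs : s.card ≤ d + 1) :
    AffineIndependent ℝ (fun i : s => momentE n d (i : Fin n)) := by
  classical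
  rw [affineIndependent_iff_homog]
  have hfun : (fun i : s => (Fin.cons 1 (momentE n d (i : Fin n)) : Fin (d + 1) → ℝ)) =
      fun i : s => (fun c : Fin (d + 1) => (((i : Fin n) : ℕ) : ℝ) ^ (c : ℕ)) := by
    funext i c
    refine Fin.cases ?_ ?_ c
    · simp
    · intro k
      simp [momentE, Fin.val_succ]
  rw [hfun]
  refine vandermonde_rows_linearIndependent _ ?_ ?_
  · intro a b hab
    have : ((a : Fin n) : ℕ) = ((b : Fin n) : ℕ) := Nat.cast_injective hab
    exact Subtype.ext (Fin.val_injective this)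
  · simpa [Fintype.card_coe] using hs

/-- For fixed matrices `M`, `E`, the homogenized rows of `M + t • E`, as
polynomial functions of `t`. -/
noncomputable def homogRowPoly {n d : ℕ} (M E : Matrix (Fin n) (Fin d) ℝ) (i : Fin n) :
    Fin (d + 1) → Polynomial ℝ :=
  Fin.cons (C 1) (fun k => C (M i k) + X * C (E i k))

lemma eval_homogRowPoly {n d : ℕ} (M E : Matrix (Fin n) (Fin d) ℝ) (i : Fin n) (t : ℝ)
    (c : Fin (d + 1)) :
    (homogRowPoly M E i c).eval t = (Fin.cons 1 ((M + t • E) i) : Fin (d + 1) → ℝ) c := by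
  refine Fin.cases ?_ ?_ c
  · simp [homogRowPoly]
  · intro k
    simp only [homogRowPoly, Fin.cons_succ, eval_add, eval_C, eval_mul, eval_X,
      Matrix.add_apply, Matrix.smul_apply, smul_eq_mul]

/-- The Gram-determinant polynomial of the homogenized rows of `M + t • E`
indexed by a finset `s`. -/
noncomputable def gramPoly {n d : ℕ} (M E : Matrix (Fin n) (Fin d) ℝ) (s : Finset (Fin n)) :
    Polynomial ℝ :=
  (Matrix.of fun i j : s => ∑ c, homogRowPoly M E i c * homogRowPoly M E j c).det

lemma eval_gramPoly {n d : ℕ} (M E : Matrix (Fin n) (Fin d) ℝ) (s : Finset (Fin n)) (t : ℝ) :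
    (gramPoly M E s).eval t =
      (Matrix.of fun i j : s => ∑ c,
        (Fin.cons 1 ((M + t • E) (i : Fin n)) : Fin (d + 1) → ℝ) c *
        (Fin.cons 1 ((M + t • E) (j : Fin n)) : Fin (d + 1) → ℝ) c).det := by
  classical
  have := RingHom.map_det (evalRingHom t) (Matrix.of fun i j : s =>
      ∑ c, homogRowPoly M E i c * homogRowPoly M E j c)
  rw [gramPoly, show eval t (Matrix.of fun i j : s =>
      ∑ c, homogRowPoly M E i c * homogRowPoly M E j c).det =
      (evalRingHom t) (Matrix.of fun i j : s =>
      ∑ c, homogRowPoly M E i c * homogRowPoly M E j c).det from rfl, this]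
  congr 1
  ext i j
  simp only [RingHom.mapMatrix_apply, Matrix.map_apply, Matrix.of_apply, map_sum, map_mul]
  exact Finset.sum_congr rfl fun c _ => by
    rw [coe_evalRingHom, eval_homogRowPoly, eval_homogRowPoly]

/-- Affine independence of the rows of `M + t • E` holds for some `t`
(when the rows of `E` are affinely independent on `s`). -/
lemma exists_t_affineIndependent {n d : ℕ} (M : Matrix (Fin n) (Fin d) ℝ)
    (s : Finset (Fin n)) (hs : s.card ≤ d + 1) :
    ∃ t : ℝ, AffineIndependent ℝ (fun i : s => (M + t • momentE n d) (i : Fin n)) := by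
  classical
  set E := momentE n d
  have hopen : IsOpen {p : s → (Fin d → ℝ) | AffineIndependent ℝ p} :=
    isOpen_setOf_affineIndependent'
  have hmem : (fun i : s => E (i : Fin n)) ∈ {p : s → (Fin d → ℝ) | AffineIndependent ℝ p} :=
    momentE_genpos s hs
  have hq : Continuous fun u : ℝ => (fun i : s => u • M (i : Fin n) + E (i : Fin n)) := by
    refine continuous_pi fun i => ?_
    exact (continuous_id.smul continuous_const).add continuous_const
  have h0 : (fun i : s => (0 : ℝ) • M (i : Fin n) + E (i : Fin n)) =
      fun i : s => E (i : Fin n) := by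
    funext i; simp
  have htend : Filter.Tendsto (fun u : ℝ => (fun i : s => u • M (i : Fin n) + E (i : Fin n)))
      (nhds 0) (nhds (fun i : s => E (i : Fin n))) := by
    have := hq.tendsto 0
    rwa [h0] at this
  have hev : ∀ᶠ u in nhds (0 : ℝ),
      AffineIndependent ℝ (fun i : s => u • M (i : Fin n) + E (i : Fin n)) :=
    htend.eventually_mem (hopen.mem_nhds hmem)
  rw [Metric.eventually_nhds_iff] at hev
  obtain ⟨ε, hεpos, hε⟩ := hev
  set u : ℝ := ε / 2 with hu
  have hu0 : u ≠ 0 := by positivity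
  have hu_ai : AffineIndependent ℝ (fun i : s => u • M (i : Fin n) + E (i : Fin n)) := by
    refine hε ?_
    rw [Real.dist_eq, sub_zero, abs_of_pos (by positivity)]
    linarith
  refine ⟨u⁻¹, ?_⟩
  have hinj : Function.Injective (fun x : Fin d → ℝ => u⁻¹ • x) :=
    smul_right_injective _ (inv_ne_zero hu0)
  have hmap : (fun i : s => (M + u⁻¹ • E) (i : Fin n)) =
      ((u⁻¹ • (LinearMap.id : (Fin d → ℝ) →ₗ[ℝ] (Fin d → ℝ))).toAffineMap) ∘
        (fun i : s => u • M (i : Fin n) + E (i : Fin n)) := by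
    funext i
    simp only [Function.comp_apply, LinearMap.coe_toAffineMap, LinearMap.smul_apply,
      LinearMap.id_apply, Matrix.add_apply, Matrix.smul_apply]
    funext c
    simp only [Pi.add_apply, Pi.smul_apply, smul_eq_mul, Matrix.add_apply, Matrix.smul_apply]
    field_simp
  rw [hmap]
  rw [AffineMap.affineIndependent_iff _ hinj]
  exact hu_ai

/-- The set of matrices whose rows are in general position is dense. -/
lemma dense_genpos_matrices {n d : ℕ} :
    Dense {M : Matrix (Fin n) (Fin d) ℝ | ∀ s : Finset (Fin n), s.card ≤ d + 1 →
      AffineIndependent ℝ (fun i : s => M (i : Fin n))} := by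
  classical
  rw [dense_iff_inter_open]
  rintro U hU ⟨M, hMU⟩
  set E := momentE n d
  -- the bad parameter set
  set T : Set ℝ := ⋃ s : Finset (Fin n), {t | s.card ≤ d + 1 ∧ (gramPoly M E s).IsRoot t}
    with hT
  have hGnz : ∀ s : Finset (Fin n), s.card ≤ d + 1 → gramPoly M E s ≠ 0 := by
    intro s hs
    obtain ⟨t0, ht0⟩ := exists_t_affineIndependent M s hs
    intro hzero
    rw [affineIndependent_iff_homog] at ht0
    rw [linearIndependent_iff_gram_det] at ht0
    apply ht0
    rw [← eval_gramPoly, hzero, eval_zero]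
  have hTfin : T.Finite := by
    refine Set.finite_iUnion fun s => ?_
    by_cases hs : s.card ≤ d + 1
    · exact (Polynomial.finite_setOf_isRoot (hGnz s hs)).subset fun t ht => ht.2
    · convert Set.finite_empty using 1
      ext t
      simp [hs]
  have hφ : Continuous fun t : ℝ => M + t • E := by
    exact continuous_const.add (continuous_id.smul continuous_const)
  have hV : (fun t : ℝ => M + t • E) ⁻¹' U ∈ nhds (0 : ℝ) := by
    refine (hφ.tendsto 0).eventually_mem ?_
    simpa using hU.mem_nhds hMU
  obtain ⟨δ, hδpos, hball⟩ := Metric.mem_nhds_iff.1 hV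
  obtain ⟨t, htIoo, htT⟩ := ((Set.Ioo_infinite hδpos).diff hTfin).nonempty
  refine ⟨M + t • E, ?_, ?_⟩
  · apply hball
    simp only [Metric.mem_ball, Real.dist_eq, sub_zero]
    rw [abs_of_pos htIoo.1]
    exact htIoo.2
  · intro s hs
    have hroot : ¬ (gramPoly M E s).IsRoot t := by
      intro hr
      exact htT (Set.mem_iUnion.2 ⟨s, hs, hr⟩)
    rw [affineIndependent_iff_homog, linearIndependent_iff_gram_det]
    rw [← eval_gramPoly]
    exact hroot

/-- Matrices with nonzero determinant are dense: near any `A` there is one. -/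
lemma exists_det_ne_zero_mem {n : ℕ} (A : Matrix (Fin n) (Fin n) ℝ)
    (U : Set (Matrix (Fin n) (Fin n) ℝ)) (hU : IsOpen U) (hA : A ∈ U) :
    ∃ A' ∈ U, A'.det ≠ 0 := by
  classical
  set P : Polynomial ℝ :=
    (Matrix.of fun i j => C (A i j) + X * C ((1 : Matrix (Fin n) (Fin n) ℝ) i j)).det with hP
  have hevalP : ∀ t : ℝ, P.eval t = (A + t • (1 : Matrix (Fin n) (Fin n) ℝ)).det := by
    intro t
    have := RingHom.map_det (evalRingHom t)
      (Matrix.of fun i j => C (A i j) + X * C ((1 : Matrix (Fin n) (Fin n) ℝ) i j))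
    rw [hP, show eval t (Matrix.of fun i j =>
        C (A i j) + X * C ((1 : Matrix (Fin n) (Fin n) ℝ) i j)).det =
        (evalRingHom t) (Matrix.of fun i j =>
        C (A i j) + X * C ((1 : Matrix (Fin n) (Fin n) ℝ) i j)).det from rfl, this]
    congr 1
    ext i j
    simp only [RingHom.mapMatrix_apply, Matrix.map_apply, Matrix.of_apply, coe_evalRingHom, eval_add, eval_mul,
      eval_C, eval_X, Matrix.add_apply, Matrix.smul_apply, smul_eq_mul]
  have hPne : P ≠ 0 := by
    -- find t with (A + t • 1).det ≠ 0 by scaling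
    have hdet_cont : Continuous fun B : Matrix (Fin n) (Fin n) ℝ => B.det :=
      continuous_id.matrix_det
    have h1 : ((1 : Matrix (Fin n) (Fin n) ℝ)).det ≠ 0 := by simp
    have hev : ∀ᶠ u in nhds (0 : ℝ),
        (u • A + (1 : Matrix (Fin n) (Fin n) ℝ)).det ≠ 0 := by
      have hc : Continuous fun u : ℝ => (u • A + (1 : Matrix (Fin n) (Fin n) ℝ)).det :=
        hdet_cont.comp ((continuous_id.smul continuous_const).add continuous_const)
      have := hc.tendsto 0
      simp only [zero_smul, zero_add] at this
      exact this.eventually_ne h1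
    rw [Metric.eventually_nhds_iff] at hev
    obtain ⟨ε, hεpos, hε⟩ := hev
    set u : ℝ := ε / 2 with hu
    have hu0 : u ≠ 0 := by positivity
    have hdu : (u • A + (1 : Matrix (Fin n) (Fin n) ℝ)).det ≠ 0 := by
      refine hε ?_
      rw [Real.dist_eq, sub_zero, abs_of_pos (by positivity)]
      linarith
    intro h0
    have := hevalP u⁻¹
    rw [h0, eval_zero] at this
    have hscale : A + u⁻¹ • (1 : Matrix (Fin n) (Fin n) ℝ) =
        u⁻¹ • (u • A + (1 : Matrix (Fin n) (Fin n) ℝ)) := by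
      rw [smul_add, smul_smul, inv_mul_cancel₀ hu0, one_smul]
    rw [hscale, Matrix.det_smul] at this
    have : (u⁻¹) ^ (Fintype.card (Fin n)) * (u • A + 1).det = 0 := this.symm
    rcases mul_eq_zero.1 this with h | h
    · exact (pow_ne_zero _ (inv_ne_zero hu0)) h
    · exact hdu h
  have hφ : Continuous fun t : ℝ => A + t • (1 : Matrix (Fin n) (Fin n) ℝ) :=
    continuous_const.add (continuous_id.smul continuous_const)
  have hV : (fun t : ℝ => A + t • (1 : Matrix (Fin n) (Fin n) ℝ)) ⁻¹' U ∈ nhds (0 : ℝ) := by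
    refine (hφ.tendsto 0).eventually_mem ?_
    simpa using hU.mem_nhds hA
  obtain ⟨δ, hδpos, hball⟩ := Metric.mem_nhds_iff.1 hV
  obtain ⟨t, htIoo, htT⟩ :=
    ((Set.Ioo_infinite hδpos).diff (Polynomial.finite_setOf_isRoot hPne)).nonempty
  refine ⟨A + t • 1, ?_, ?_⟩
  · apply hball
    simp only [Metric.mem_ball, Real.dist_eq, sub_zero]
    rw [abs_of_pos htIoo.1]
    exact htIoo.2
  · rw [← hevalP]
    exact htT

end Aux

/-- The set of pairs `(A, X)` of an `n × n` matrix and an `n × d` matrix such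
that the `n` rows of `A·X`, viewed as points of `ℝ^d`, are in general
position: every subfamily of at most `d + 1` rows is affinely independent. -/
def genPosRowPairs (n d : ℕ) :
    Set (Matrix (Fin n) (Fin n) ℝ × Matrix (Fin n) (Fin d) ℝ) :=
  {q | ∀ s : Finset (Fin n), s.card ≤ d + 1 →
    AffineIndependent ℝ (fun i : s => (q.1 * q.2) (i : Fin n))}

/-- For `n, d ≥ 1`, the set of pairs `(A, X)` such that the
rows of `A·X` are in general position in `ℝ^d` is open and dense in the
product space of pairs of matrices: it is a generic property of the matrices
`A` and `X` that the rows of `A·X` are in general position. -/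
theorem generic_rows_genpos {n d : ℕ} (hn : 1 ≤ n) (hd : 1 ≤ d) :
    IsOpen (genPosRowPairs n d) ∧ Dense (genPosRowPairs n d) := by
  classical
  constructor
  · -- openness
    have hrep : genPosRowPairs n d = ⋂ s : Finset (Fin n),
        {q : Matrix (Fin n) (Fin n) ℝ × Matrix (Fin n) (Fin d) ℝ |
          s.card ≤ d + 1 → AffineIndependent ℝ (fun i : s => (q.1 * q.2) (i : Fin n))} := by
      ext q
      simp [genPosRowPairs, Set.mem_iInter]
    rw [hrep]
    refine isOpen_iInter_of_finite fun s => ?_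
    by_cases hs : s.card ≤ d + 1
    · have hrep2 : {q : Matrix (Fin n) (Fin n) ℝ × Matrix (Fin n) (Fin d) ℝ |
          s.card ≤ d + 1 → AffineIndependent ℝ (fun i : s => (q.1 * q.2) (i : Fin n))} =
          (fun q : Matrix (Fin n) (Fin n) ℝ × Matrix (Fin n) (Fin d) ℝ =>
            (fun i : s => (q.1 * q.2) (i : Fin n))) ⁻¹'
            {p : s → (Fin d → ℝ) | AffineIndependent ℝ p} := by
        ext q
        simp [hs]
      rw [hrep2]
      refine isOpen_setOf_affineIndependent'.preimage ?_
      refine continuous_pi fun i => ?_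
      exact (continuous_apply ((i : Fin n))).comp (continuous_fst.matrix_mul continuous_snd)
    · have : {q : Matrix (Fin n) (Fin n) ℝ × Matrix (Fin n) (Fin d) ℝ |
          s.card ≤ d + 1 → AffineIndependent ℝ (fun i : s => (q.1 * q.2) (i : Fin n))} =
          Set.univ := by
        ext q
        simp [hs]
      rw [this]
      exact isOpen_univ
  · -- density
    rw [dense_iff_inter_open]
    rintro U hU ⟨⟨A, X⟩, hq⟩
    obtain ⟨U₁, U₂, hU₁, hU₂, hA, hX, hsub⟩ := isOpen_prod_iff.1 hU A X hq
    obtain ⟨A', hA'U, hA'det⟩ := exists_det_ne_zero_mem A U₁ hU₁ hA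
    have hunit : IsUnit A'.det := isUnit_iff_ne_zero.2 hA'det
    set V : Set (Matrix (Fin n) (Fin d) ℝ) := (fun M => A'⁻¹ * M) ⁻¹' U₂ with hV
    have hVopen : IsOpen V :=
      hU₂.preimage (continuous_const.matrix_mul continuous_id)
    have hVmem : A' * X ∈ V := by
      have : A'⁻¹ * (A' * X) = X := by
        rw [← Matrix.mul_assoc, Matrix.nonsing_inv_mul _ hunit, Matrix.one_mul]
      simpa [hV, this] using hX
    obtain ⟨M', hM'V, hM'D⟩ :=
      dense_iff_inter_open.1 dense_genpos_matrices V hVopen ⟨A' * X, hVmem⟩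
    refine ⟨(A', A'⁻¹ * M'), hsub ⟨hA'U, hM'V⟩, ?_⟩
    intro s hs
    have hAX : A' * (A'⁻¹ * M') = M' := by
      rw [← Matrix.mul_assoc, Matrix.mul_nonsing_inv _ hunit, Matrix.one_mul]
    simpa [hAX] using hM'D s hs
end
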